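/- arXiv:1811.10643 — 2 statements merged into one kernel-verified Lean document; each statement's English description precedes it below -/
import Mathlib

section
/- Let 𝒲 ⊂ Λ be a finite saturated set of weights, regarded as a subposet of Λ in the induced order. Then: (1) for μ, ν ∈ 𝒲, ν covers μ in 𝒲 if and only if μ + α_i = ν for some i ∈ I; (2) coloring each covering edge μ → ν by the (unique) i with μ + α_i = ν, every i-component of 𝒲 is a chain, for each i ∈ I; (3) the poset 𝒲 is ranked; (4) for every μ ∈ 𝒲, m_i(μ) = ⟨μ, α_i∨⟩ for all i ∈ I, so wt(μ) = μ and hence 𝒲 is an M_Φ-structured poset. -/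
open scoped BigOperators RealInnerProductSpace

noncomputable section

/-- The coroot `β∨ = (2/⟨β,β⟩) β` of a vector `β`. -/
def coroot {E : Type*} [NormedAddCommGroup E] [InnerProductSpace ℝ E] (β : E) : E :=
  (2 / ⟪β, β⟫) • β

/-- The reflection `v ↦ v - ⟨v, β∨⟩ β` determined by `β`, as a plain function. -/
def rootReflection {E : Type*} [NormedAddCommGroup E] [InnerProductSpace ℝ E] (β v : E) : E :=
  v - ⟪v, coroot β⟫ • β

/-- The determinant (sign) of a linear automorphism, as an integer (`±1` on the Weyl group). -/
def sgnDet {E : Type*} [NormedAddCommGroup E] [InnerProductSpace ℝ E] (w : E ≃ₗ[ℝ] E) : ℤ :=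
  if LinearMap.det (w : E →ₗ[ℝ] E) = 1 then 1 else -1

/-- A finite crystallographic root system `Φ` spanning the real inner-product space `E`,
with a fixed base of simple roots `{αᵢ}_{i ∈ I}` (a basis of `E`), together with the
corresponding fundamental weights `{ωᵢ}` (the basis dual to the simple coroots). -/
structure RootSystemBase (E : Type*) [NormedAddCommGroup E] [InnerProductSpace ℝ E]
    (I : Type*) [Fintype I] [DecidableEq I] where
  Φ : Set E
  finite : Φ.Finite
  zero_not_mem : (0 : E) ∉ Φ
  neg_mem : ∀ β ∈ Φ, -β ∈ Φ
  αBasis : Module.Basis I ℝ E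
  simple_mem : ∀ i, αBasis i ∈ Φ
  reflect_mem : ∀ β ∈ Φ, ∀ γ ∈ Φ, rootReflection β γ ∈ Φ
  crystallographic : ∀ β ∈ Φ, ∀ γ ∈ Φ, ∃ k : ℤ, ⟪γ, coroot β⟫ = (k : ℝ)
  reduced : ∀ β ∈ Φ, ∀ t : ℝ, t • β ∈ Φ → t = 1 ∨ t = -1
  base_int : ∀ β ∈ Φ, ∀ i, ∃ k : ℤ, αBasis.repr β i = (k : ℝ)
  base_signs : ∀ β ∈ Φ, (∀ i, 0 ≤ αBasis.repr β i) ∨ (∀ i, αBasis.repr β i ≤ 0)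
  ω : I → E
  ω_dual : ∀ i j, ⟪ω i, coroot (αBasis j)⟫ = if i = j then (1 : ℝ) else 0

namespace RootSystemBase

variable {E : Type*} [NormedAddCommGroup E] [InnerProductSpace ℝ E]
  {I : Type*} [Fintype I] [DecidableEq I]

variable (S : RootSystemBase E I)

/-- The simple roots. -/
def α (i : I) : E := S.αBasis i

/-- The set `Φ⁺` of positive roots. -/
def pos : Set E := {β | β ∈ S.Φ ∧ ∀ i, 0 ≤ S.αBasis.repr β i}

/-- The set `Φ⁻` of negative roots. -/
def neg : Set E := {β | β ∈ S.Φ ∧ ∀ i, S.αBasis.repr β i ≤ 0}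

/-- The Weyl group `W`: the subgroup of the linear automorphism group of `E`
generated by the simple reflections. -/
def W : Subgroup (E ≃ₗ[ℝ] E) :=
  Subgroup.closure {w : E ≃ₗ[ℝ] E | ∃ i, ∀ v, w v = rootReflection (S.α i) v}

/-- `μ` lies in the weight lattice `Λ` (the ℤ-span of the fundamental weights). -/
def IsWeight (μ : E) : Prop := ∃ c : I → ℤ, μ = ∑ i, (c i : ℝ) • S.ω i

/-- `μ` is a dominant weight (a nonnegative-integer combination of the `ωᵢ`). -/
def IsDominant (μ : E) : Prop := ∃ c : I → ℕ, μ = ∑ i, (c i : ℝ) • S.ω i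

/-- `μ` is a strongly dominant weight. -/
def IsStronglyDominant (μ : E) : Prop :=
  ∃ c : I → ℤ, (∀ i, 0 < c i) ∧ μ = ∑ i, (c i : ℝ) • S.ω i

/-- The partial order on `Λ`: `μ ≤ ν` iff `ν - μ` is a nonnegative-integer combination
of simple roots. -/
def wle (μ ν : E) : Prop := ∃ k : I → ℕ, ν - μ = ∑ i, (k i : ℝ) • S.α i

/-- `ϱ`, the sum of the fundamental weights. -/
def rho : E := ∑ i, S.ω i

/-- `ϱ∨ = Σᵢ (2/⟨αᵢ,αᵢ⟩) ωᵢ`. -/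
def rhoCheck : E := ∑ i, (2 / ⟪S.α i, S.α i⟫) • S.ω i

/-- The weight diagram `Π(λ)` of a dominant weight. -/
def PiWt (lam : E) : Set E :=
  {μ | S.IsWeight μ ∧
    ∃ w : E ≃ₗ[ℝ] E, w ∈ S.W ∧ ∃ ν : E, S.IsDominant ν ∧ S.wle ν lam ∧ μ = w ν}

/-- A saturated set of weights. -/
def Saturated (A : Set E) : Prop :=
  ∀ ν ∈ A, ∀ β ∈ S.Φ, ∀ k : ℤ,
    (((0 : ℝ) ≤ (k : ℝ) ∧ (k : ℝ) ≤ ⟪ν, coroot β⟫) ∨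
      (⟪ν, coroot β⟫ ≤ (k : ℝ) ∧ (k : ℝ) ≤ 0)) →
    ν - (k : ℝ) • β ∈ A

/-- The `W`-orbit of `lam`. -/
def orbit (lam : E) : Set E := {μ | ∃ w : E ≃ₗ[ℝ] E, w ∈ S.W ∧ μ = w lam}

end RootSystemBase

/-- `e^μ`, a basis element of the group ring. -/
def expw {E : Type*} [AddCommGroup E] (μ : E) : AddMonoidAlgebra ℤ E :=
  AddMonoidAlgebra.single μ 1

/-- The coefficient of `e^μ` in `φ`. -/
def coeffOf {E : Type*} [AddCommGroup E] (φ : AddMonoidAlgebra ℤ E) (μ : E) : ℤ :=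
  φ.coeff μ

/-- The support of an element of the group ring. -/
def suppOf {E : Type*} [AddCommGroup E] (φ : AddMonoidAlgebra ℤ E) : Finset E :=
  φ.coeff.support

/-- The action `w ⬝ e^μ = e^{w(μ)}` of a linear automorphism on the group ring. -/
def actGR {E : Type*} [NormedAddCommGroup E] [InnerProductSpace ℝ E]
    (w : E ≃ₗ[ℝ] E) (φ : AddMonoidAlgebra ℤ E) : AddMonoidAlgebra ℤ E :=
  AddMonoidAlgebra.ofCoeff (Finsupp.mapDomain (⇑w) φ.coeff)

namespace RootSystemBase

variable {E : Type*} [NormedAddCommGroup E] [InnerProductSpace ℝ E]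
  {I : Type*} [Fintype I] [DecidableEq I]
variable (S : RootSystemBase E I)

/-- `φ` lies in the group ring `ℤ[Λ]`. -/
def InGroupRing (φ : AddMonoidAlgebra ℤ E) : Prop := ∀ μ ∈ suppOf φ, S.IsWeight μ

/-- `φ` is a Weyl alternant: `w ⬝ φ = det(w) φ` for all `w ∈ W`. -/
def IsAlternant (φ : AddMonoidAlgebra ℤ E) : Prop :=
  ∀ w : E ≃ₗ[ℝ] E, w ∈ S.W → actGR w φ = sgnDet w • φ

/-- `φ` is `W`-invariant. -/
def IsInvariant (φ : AddMonoidAlgebra ℤ E) : Prop :=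
  ∀ w : E ≃ₗ[ℝ] E, w ∈ S.W → actGR w φ = φ

/-- The alternation operator `𝒜(φ) = Σ_{w ∈ W} det(w) (w ⬝ φ)`. -/
def Alt (φ : AddMonoidAlgebra ℤ E) : AddMonoidAlgebra ℤ E :=
  ∑ᶠ w : S.W, sgnDet (w : E ≃ₗ[ℝ] E) • actGR (w : E ≃ₗ[ℝ] E) φ

/-- `χ` is the Weyl bialternant attached to the dominant weight `lam`:  the unique
element of `ℤ[Λ]` with `𝒜(e^ϱ) ⬝ χ = 𝒜(e^{lam+ϱ})`. -/
def IsBialternant (lam : E) (χ : AddMonoidAlgebra ℤ E) : Prop :=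
  S.InGroupRing χ ∧ S.Alt (expw S.rho) * χ = S.Alt (expw (lam + S.rho))

end RootSystemBase


section AuxPf

variable {E : Type*} [NormedAddCommGroup E] [InnerProductSpace ℝ E]
  {I : Type*} [Fintype I] [DecidableEq I] (S : RootSystemBase E I)

lemma aux_alpha_ne (i : I) : S.α i ≠ 0 := by
  intro h
  exact S.zero_not_mem (h ▸ S.simple_mem i)

lemma aux_inner_alpha_pos (i : I) : 0 < ⟪S.α i, S.α i⟫ :=
  lt_of_le_of_ne real_inner_self_nonneg
    (Ne.symm (inner_self_ne_zero.2 (aux_alpha_ne S i)))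

lemma aux_inner_self_pos {x : E} (hx : x ≠ 0) : 0 < ⟪x, x⟫ :=
  lt_of_le_of_ne real_inner_self_nonneg (Ne.symm (inner_self_ne_zero.2 hx))

lemma aux_pair_alpha_self (i : I) : ⟪S.α i, coroot (S.α i)⟫ = 2 := by
  have h := (aux_inner_alpha_pos S i).ne'
  rw [coroot, real_inner_smul_right]
  field_simp

lemma aux_pair_omega (i j : I) :
    ⟪S.ω i, coroot (S.α j)⟫ = if i = j then (1 : ℝ) else 0 := S.ω_dual i j

lemma aux_inner_omega_alpha (i j : I) :
    ⟪S.ω i, S.α j⟫ = if i = j then ⟪S.α j, S.α j⟫ / 2 else 0 := by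
  have h := (aux_inner_alpha_pos S j).ne'
  have := S.ω_dual i j
  rw [coroot, real_inner_smul_right] at this
  rw [show S.αBasis j = S.α j from rfl] at this
  by_cases hij : i = j <;> simp only [hij, if_true, if_false] at this ⊢
  · field_simp at this ⊢; linarith
  · field_simp at this; simpa using this

lemma aux_pair_weight {μ : E} (hμ : S.IsWeight μ) (i : I) :
    ∃ k : ℤ, ⟪μ, coroot (S.α i)⟫ = (k : ℝ) := by
  obtain ⟨c, rfl⟩ := hμ
  refine ⟨c i, ?_⟩
  rw [sum_inner]
  have : ∀ j, ⟪((c j : ℝ)) • S.ω j, coroot (S.α i)⟫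
      = (c j : ℝ) * (if j = i then (1:ℝ) else 0) := by
    intro j; rw [real_inner_smul_left, show S.α i = S.αBasis i from rfl, S.ω_dual j i]
  simp_rw [this, mul_ite, mul_one, mul_zero]
  simp

lemma aux_pair_linear (x : E) (i : I) (t : ℝ) :
    ⟪x + t • S.α i, coroot (S.α i)⟫ = ⟪x, coroot (S.α i)⟫ + 2 * t := by
  rw [inner_add_left, real_inner_smul_left, aux_pair_alpha_self]
  ring

lemma aux_g_alpha (i : I) : ⟪S.α i, S.rhoCheck⟫ = 1 := by
  rw [RootSystemBase.rhoCheck, inner_sum]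
  have : ∀ j, ⟪S.α i, (2 / ⟪S.α j, S.α j⟫) • S.ω j⟫ = if j = i then (1:ℝ) else 0 := by
    intro j
    rw [real_inner_smul_right, real_inner_comm (S.ω j) (S.α i), aux_inner_omega_alpha]
    have h := (aux_inner_alpha_pos S i).ne'
    by_cases hij : j = i <;> simp only [hij, if_true, if_false]
    · field_simp
    · simp
  simp_rw [this]
  simp

lemma aux_single_sum (j : I) (c : ℕ) :
    ∑ l, (((if l = j then c else 0 : ℕ)) : ℝ) • S.α l = (c : ℝ) • S.α j := by
  rw [Finset.sum_eq_single j]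
  · simp
  · intro b _ hb; simp [hb]
  · simp

lemma aux_wle_smul {x y : E} (i : I) (c : ℕ) (h : y - x = (c : ℝ) • S.α i) :
    S.wle x y :=
  ⟨fun l => if l = i then c else 0, by rw [h, ← aux_single_sum S i c]⟩

lemma aux_sat {Wt : Set E} (hsat : S.Saturated Wt) {ν : E} (hν : ν ∈ Wt) (i : I) (k : ℤ)
    (h : (((0 : ℝ) ≤ (k : ℝ) ∧ (k : ℝ) ≤ ⟪ν, coroot (S.α i)⟫) ∨
      (⟪ν, coroot (S.α i)⟫ ≤ (k : ℝ) ∧ (k : ℝ) ≤ 0))) :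
    ν - (k : ℝ) • S.α i ∈ Wt :=
  hsat ν hν _ (S.simple_mem i) k h


lemma aux_one_sum (j : I) :
    ∑ l, (if l = j then (1 : ℝ) else 0) • S.α l = S.α j := by
  rw [Finset.sum_eq_single j]
  · simp
  · intro b _ hb; simp [hb]
  · simp

lemma aux_sum_sub (k : I → ℕ) (j : I) (hkj : 1 ≤ k j) :
    ∑ l, (((if l = j then k j - 1 else k l : ℕ)) : ℝ) • S.α l
      = (∑ l, (k l : ℝ) • S.α l) - S.α j := by
  have h : ∀ l, (((if l = j then k j - 1 else k l : ℕ)) : ℝ) • S.α l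
      = (k l : ℝ) • S.α l - (if l = j then (1 : ℝ) else 0) • S.α l := by
    intro l
    by_cases hl : l = j
    · subst hl; rw [if_pos rfl, if_pos rfl, Nat.cast_sub hkj]; push_cast; module
    · simp [hl]
  simp_rw [h]
  rw [Finset.sum_sub_distrib, aux_one_sum]

lemma aux_interval {Wt : Set E} (hWt : ∀ μ ∈ Wt, S.IsWeight μ) (hsat : S.Saturated Wt)
    {μ : E} (hμ : μ ∈ Wt) (i : I) (k : ℕ) (hk : μ + (k : ℝ) • S.α i ∈ Wt) :
    ∀ j : ℕ, j ≤ k → μ + (j : ℝ) • S.α i ∈ Wt := by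
  intro j hj
  obtain ⟨p, hp⟩ := aux_pair_weight S (hWt μ hμ) i
  by_cases hc : p + (j : ℤ) ≤ 0
  · have h := aux_sat S hsat hμ i (-(j : ℤ))
      (Or.inr ⟨by rw [hp]; exact_mod_cast (by omega : p ≤ -(j : ℤ)), by push_cast; exact neg_nonpos.2 (Nat.cast_nonneg _)⟩)
    have e : μ + (j : ℝ) • S.α i = μ - ((-(j : ℤ) : ℤ) : ℝ) • S.α i := by push_cast; module
    rw [e]; exact h
  · push_neg at hc
    have hpν : ⟪μ + (k : ℝ) • S.α i, coroot (S.α i)⟫ = (p : ℝ) + 2 * k := by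
      rw [aux_pair_linear, hp]
    have h := aux_sat S hsat hk i ((k : ℤ) - j)
      (Or.inl ⟨by exact_mod_cast (by omega : (0:ℤ) ≤ (k:ℤ) - j),
        by
          rw [hpν]; push_cast
          have h1 : (1:ℝ) ≤ (p:ℝ) + (j:ℝ) := by exact_mod_cast (by omega : (1:ℤ) ≤ p + (j:ℤ))
          have h2 : (0:ℝ) ≤ (k:ℝ) := Nat.cast_nonneg k
          linarith⟩)
    have e : μ + (j : ℝ) • S.α i
        = μ + (k : ℝ) • S.α i - (((k : ℤ) - j : ℤ) : ℝ) • S.α i := by push_cast; module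
    rw [e]; exact h

lemma aux_up {Wt : Set E} (hWt : ∀ μ ∈ Wt, S.IsWeight μ) (hsat : S.Saturated Wt)
    {μ : E} (hμ : μ ∈ Wt) (i : I) (b : ℕ)
    (hb1 : μ + ((b : ℝ) + 1) • S.α i ∉ Wt) :
    ∀ t : ℕ, μ + (t : ℝ) • S.α i ∈ Wt → t ≤ b := by
  intro t ht
  by_contra hgt
  push_neg at hgt
  have h := aux_interval S hWt hsat hμ i t ht (b + 1) (by omega)
  apply hb1
  have e : μ + ((b : ℝ) + 1) • S.α i = μ + (((b + 1 : ℕ)) : ℝ) • S.α i := by push_cast; ring_nf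
  rw [e]; exact h

lemma aux_down {Wt : Set E} (hWt : ∀ μ ∈ Wt, S.IsWeight μ) (hsat : S.Saturated Wt)
    {μ : E} (hμ : μ ∈ Wt) (i : I) (a : ℕ)
    (ha1 : μ - ((a : ℝ) + 1) • S.α i ∉ Wt) :
    ∀ t : ℕ, μ - (t : ℝ) • S.α i ∈ Wt → t ≤ a := by
  intro t ht
  by_contra hgt
  push_neg at hgt
  have hbase : (μ - (t : ℝ) • S.α i) + (t : ℝ) • S.α i ∈ Wt := by
    have e : (μ - (t : ℝ) • S.α i) + (t : ℝ) • S.α i = μ := by module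
    rw [e]; exact hμ
  have h := aux_interval S hWt hsat ht i t hbase (t - (a + 1)) (by omega)
  apply ha1
  have e : μ - ((a : ℝ) + 1) • S.α i
      = (μ - (t : ℝ) • S.α i) + (((t - (a + 1) : ℕ)) : ℝ) • S.α i := by
    rw [Nat.cast_sub (by omega : a + 1 ≤ t)]; push_cast; module
  rw [e]; exact h

lemma aux_part4 {Wt : Set E} (hWt : ∀ μ ∈ Wt, S.IsWeight μ) (hsat : S.Saturated Wt)
    {μ : E} (i : I) (a b : ℕ)
    (ha : ∀ k : ℕ, k ≤ a → μ - (k : ℝ) • S.α i ∈ Wt)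
    (ha1 : μ - ((a : ℝ) + 1) • S.α i ∉ Wt)
    (hb : ∀ k : ℕ, k ≤ b → μ + (k : ℝ) • S.α i ∈ Wt)
    (hb1 : μ + ((b : ℝ) + 1) • S.α i ∉ Wt) :
    (a : ℝ) - (b : ℝ) = ⟪μ, coroot (S.α i)⟫ := by
  have hμ : μ ∈ Wt := by simpa using hb 0 (Nat.zero_le _)
  obtain ⟨p, hp⟩ := aux_pair_weight S (hWt μ hμ) i
  have hν : μ + (b : ℝ) • S.α i ∈ Wt := hb b le_rfl
  have hpν : ⟪μ + (b : ℝ) • S.α i, coroot (S.α i)⟫ = (p : ℝ) + 2 * b := by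
    rw [aux_pair_linear, hp]
  -- p + 2b ≥ 0
  have hq : 0 ≤ p + 2 * (b : ℤ) := by
    by_contra h
    push_neg at h
    have hmem := aux_sat S hsat hν i (-1)
      (Or.inr ⟨by rw [hpν]; exact_mod_cast (by omega : p + 2 * (b:ℤ) ≤ -1), by norm_num⟩)
    apply hb1
    have e : μ + ((b : ℝ) + 1) • S.α i
        = μ + (b : ℝ) • S.α i - ((-1 : ℤ) : ℝ) • S.α i := by push_cast; module
    rw [e]; exact hmem
  have hmem := aux_sat S hsat hν i (p + 2 * b)
    (Or.inl ⟨by exact_mod_cast hq, by rw [hpν]; push_cast; ring_nf; rfl⟩)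
  have hpb : p + (b : ℤ) ≤ a := by
    by_cases hs : 0 ≤ p + (b : ℤ)
    · have hmem' : μ - (((p + (b:ℤ)).toNat : ℕ) : ℝ) • S.α i ∈ Wt := by
        have e : μ - (((p + (b:ℤ)).toNat : ℕ) : ℝ) • S.α i
            = μ + (b : ℝ) • S.α i - ((p + 2 * b : ℤ) : ℝ) • S.α i := by
          rw [show (((p + (b:ℤ)).toNat : ℕ) : ℝ) = ((p + (b:ℤ) : ℤ) : ℝ) by
            exact_mod_cast congrArg (Int.cast : ℤ → ℝ) (Int.toNat_of_nonneg hs)]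
          push_cast; module
        rw [e]; exact hmem
      have := aux_down S hWt hsat hμ i a ha1 _ hmem'
      omega
    · omega
  -- lower bound
  have hξ : μ - (a : ℝ) • S.α i ∈ Wt := ha a le_rfl
  have hpξ : ⟪μ - (a : ℝ) • S.α i, coroot (S.α i)⟫ = (p : ℝ) - 2 * a := by
    have e : μ - (a : ℝ) • S.α i = μ + (-(a : ℝ)) • S.α i := by module
    rw [e, aux_pair_linear, hp]; ring
  have hq' : p - 2 * (a : ℤ) ≤ 0 := by
    by_contra h
    push_neg at h
    have hmem2 := aux_sat S hsat hξ i 1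
      (Or.inl ⟨by norm_num, by rw [hpξ]; exact_mod_cast (by omega : (1:ℤ) ≤ p - 2 * a)⟩)
    apply ha1
    have e : μ - ((a : ℝ) + 1) • S.α i
        = μ - (a : ℝ) • S.α i - ((1 : ℤ) : ℝ) • S.α i := by push_cast; module
    rw [e]; exact hmem2
  have hmem2 := aux_sat S hsat hξ i (p - 2 * a)
    (Or.inr ⟨by rw [hpξ]; push_cast; ring_nf; rfl, by exact_mod_cast hq'⟩)
  have hap : (a : ℤ) - p ≤ b := by
    by_cases hs : 0 ≤ (a : ℤ) - p
    · have hmem' : μ + ((((a:ℤ) - p).toNat : ℕ) : ℝ) • S.α i ∈ Wt := by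
        have e : μ + ((((a:ℤ) - p).toNat : ℕ) : ℝ) • S.α i
            = μ - (a : ℝ) • S.α i - ((p - 2 * a : ℤ) : ℝ) • S.α i := by
          rw [show ((((a:ℤ) - p).toNat : ℕ) : ℝ) = (((a:ℤ) - p : ℤ) : ℝ) by
            exact_mod_cast congrArg (Int.cast : ℤ → ℝ) (Int.toNat_of_nonneg hs)]
          push_cast; module
        rw [e]; exact hmem2
      have := aux_up S hWt hsat hμ i b hb1 _ hmem'
      omega
    · omega
  have hfin : p = (a : ℤ) - b := by omega
  rw [hp, hfin]; push_cast; ring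

lemma aux_part1 {Wt : Set E} (hWt : ∀ μ ∈ Wt, S.IsWeight μ) (hsat : S.Saturated Wt)
    {μ ν : E} (hμ : μ ∈ Wt) (hν : ν ∈ Wt) :
    (S.wle μ ν ∧ μ ≠ ν ∧ ∀ ξ ∈ Wt, S.wle μ ξ → S.wle ξ ν → ξ = μ ∨ ξ = ν)
      ↔ ∃ i, μ + S.α i = ν := by
  constructor
  · rintro ⟨⟨k, hk⟩, hne, hcov⟩
    have hsub : ν - μ ≠ 0 := sub_ne_zero.2 (Ne.symm hne)
    have hpos : 0 < ⟪ν - μ, ν - μ⟫ := aux_inner_self_pos hsub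
    have hsum : ⟪ν - μ, ν - μ⟫ = ∑ j, (k j : ℝ) * ⟪ν - μ, S.α j⟫ := by
      nth_rewrite 2 [hk]
      rw [inner_sum]
      simp_rw [real_inner_smul_right]
    have hex : ∃ j, 0 < (k j : ℝ) * ⟪ν - μ, S.α j⟫ := by
      by_contra h
      push_neg at h
      have := Finset.sum_nonpos (fun j (_ : j ∈ Finset.univ) => h j)
      rw [← hsum] at this
      linarith
    obtain ⟨j, hj⟩ := hex
    have hkj : 1 ≤ k j := by
      rcases Nat.eq_zero_or_pos (k j) with h | h
      · rw [h] at hj; simp at hj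
      · exact h
    have hinj : 0 < ⟪ν - μ, S.α j⟫ := by
      by_contra h
      push_neg at h
      nlinarith [(Nat.cast_nonneg (k j) : (0:ℝ) ≤ (k j : ℝ))]
    have hco : 0 < ⟪ν - μ, coroot (S.α j)⟫ := by
      rw [coroot, real_inner_smul_right]
      have h2 := aux_inner_alpha_pos S j
      positivity
    obtain ⟨pν, hpν⟩ := aux_pair_weight S (hWt ν hν) j
    obtain ⟨pμ, hpμ⟩ := aux_pair_weight S (hWt μ hμ) j
    have hlt : pμ < pν := by
      rw [inner_sub_left, hpν, hpμ] at hco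
      exact_mod_cast (by linarith : (pμ : ℝ) < pν)
    by_cases h1 : 1 ≤ pν
    · have hmem := aux_sat S hsat hν j 1
        (Or.inl ⟨by norm_num, by rw [hpν]; exact_mod_cast h1⟩)
      have hmem' : ν - S.α j ∈ Wt := by
        have e : ν - S.α j = ν - ((1 : ℤ) : ℝ) • S.α j := by push_cast; module
        rw [e]; exact hmem
      have hw1 : S.wle (ν - S.α j) ν := aux_wle_smul S j 1 (by push_cast; module)
      have hw2 : S.wle μ (ν - S.α j) :=
        ⟨fun l => if l = j then k j - 1 else k l, by
          rw [aux_sum_sub S k j hkj, ← hk]; abel⟩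
      rcases hcov _ hmem' hw2 hw1 with h | h
      · exact ⟨j, by rw [← h]; abel⟩
      · exfalso
        exact aux_alpha_ne S j (sub_eq_self.1 h)
    · have h2 : pμ ≤ -1 := by omega
      have hmem := aux_sat S hsat hμ j (-1)
        (Or.inr ⟨by rw [hpμ]; exact_mod_cast h2, by norm_num⟩)
      have hmem' : μ + S.α j ∈ Wt := by
        have e : μ + S.α j = μ - ((-1 : ℤ) : ℝ) • S.α j := by push_cast; module
        rw [e]; exact hmem
      have hw1 : S.wle μ (μ + S.α j) := aux_wle_smul S j 1 (by push_cast; module)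
      have hw2 : S.wle (μ + S.α j) ν :=
        ⟨fun l => if l = j then k j - 1 else k l, by
          rw [aux_sum_sub S k j hkj, ← hk]; abel⟩
      rcases hcov _ hmem' hw1 hw2 with h | h
      · exfalso
        exact aux_alpha_ne S j (by simpa using congrArg (fun z => z - μ) h)
      · exact ⟨j, h⟩
  · rintro ⟨j, hj⟩
    refine ⟨aux_wle_smul S j 1 (by rw [← hj]; push_cast; module), ?_, ?_⟩
    · intro h
      apply aux_alpha_ne S j
      have : μ + S.α j = μ := by rw [hj, ← h]
      simpa using congrArg (fun z => z - μ) this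
    · rintro ξ hξ ⟨c, hc⟩ ⟨d, hd⟩
      have he : (∑ l, ((c l : ℝ) + (d l : ℝ)) • S.αBasis l)
          = ∑ l, (if l = j then (1 : ℝ) else 0) • S.αBasis l := by
        have e1 : ∑ l, ((c l : ℝ) + (d l : ℝ)) • S.αBasis l
            = (∑ l, (c l : ℝ) • S.α l) + ∑ l, (d l : ℝ) • S.α l := by
          rw [← Finset.sum_add_distrib]
          exact Finset.sum_congr rfl (fun l _ => by rw [add_smul]; rfl)
        have e2 : ∑ l, (if l = j then (1 : ℝ) else 0) • S.αBasis l = S.α j :=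
          aux_one_sum S j
        rw [e1, ← hc, ← hd, e2, ← hj]; abel
      have hrepr : (fun l => (c l : ℝ) + (d l : ℝ)) = (fun l => if l = j then (1:ℝ) else 0) := by
        have h5 := congrArg (fun z => ⇑(S.αBasis.repr z)) he
        simpa only [Module.Basis.repr_sum_self] using h5
      have hsum : ∀ l, c l + d l = (if l = j then 1 else 0 : ℕ) := by
        intro l
        have h3 : (c l : ℝ) + (d l : ℝ) = (if l = j then (1:ℝ) else 0) := congrFun hrepr l
        by_cases hl : l = j
        · subst hl; rw [if_pos rfl] at h3 ⊢; exact_mod_cast h3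
        · rw [if_neg hl] at h3 ⊢; exact_mod_cast h3
      by_cases hc0 : c j = 0
      · left
        have hz : ∀ l, c l = 0 := by
          intro l
          have h4 := hsum l
          by_cases hl : l = j
          · subst hl; omega
          · rw [if_neg hl] at h4; omega
        have : ξ - μ = 0 := by rw [hc]; simp [hz]
        exact sub_eq_zero.1 this
      · right
        have hz : ∀ l, d l = 0 := by
          intro l
          have h4 := hsum l
          by_cases hl : l = j
          · subst hl; rw [if_pos rfl] at h4; omega
          · rw [if_neg hl] at h4; omega
        have : ν - ξ = 0 := by rw [hd]; simp [hz]
        exact (sub_eq_zero.1 this).symm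


end AuxPf

/-- **Proposition 3.6**:  let `𝒲 ⊂ Λ` be a finite saturated set of weights, viewed as a
subposet of `Λ`.  Then:  `(1)` `ν` covers `μ` in `𝒲` iff `μ + αᵢ = ν` for some `i`;
`(2)` coloring covering edges by the simple-root index, every `i`-component of `𝒲` lies
on a line `μ + ℤαᵢ` and is totally ordered (a chain);  `(3)` `𝒲` is ranked;
`(4)` for `μ ∈ 𝒲` and `i ∈ I`, `m_i(μ) = ρ_i(μ) - δ_i(μ) = ⟨μ, αᵢ∨⟩`, so `wt(μ) = μ` and
`𝒲` is `M_Φ`-structured. -/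
theorem statement11 {E : Type*} [NormedAddCommGroup E] [InnerProductSpace ℝ E]
    [FiniteDimensional ℝ E] {I : Type*} [Fintype I] [DecidableEq I]
    (S : RootSystemBase E I) (Wt : Set E)
    (hWt : ∀ μ ∈ Wt, S.IsWeight μ) (hfin : Wt.Finite) (hsat : S.Saturated Wt) :
    -- (1)
    (∀ μ ∈ Wt, ∀ ν ∈ Wt,
      (S.wle μ ν ∧ μ ≠ ν ∧ ∀ ξ ∈ Wt, S.wle μ ξ → S.wle ξ ν → ξ = μ ∨ ξ = ν)
        ↔ ∃ i, μ + S.α i = ν) ∧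
    -- (2)
    (∀ i : I, ∀ μ ∈ Wt, ∀ ν : E,
      Relation.ReflTransGen
        (fun x y => (x ∈ Wt ∧ y ∈ Wt) ∧ (x + S.α i = y ∨ y + S.α i = x)) μ ν →
      (∃ k : ℤ, ν - μ = (k : ℝ) • S.α i) ∧ (S.wle μ ν ∨ S.wle ν μ)) ∧
    -- (3)
    (Wt.Nonempty → ∃ (L : ℕ) (r : E → ℕ),
      (∀ m : ℕ, m ≤ L → ∃ μ ∈ Wt, r μ = m) ∧ (∀ μ ∈ Wt, r μ ≤ L) ∧
      ∀ μ ∈ Wt, ∀ ν ∈ Wt,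
        (S.wle μ ν ∧ μ ≠ ν ∧ ∀ ξ ∈ Wt, S.wle μ ξ → S.wle ξ ν → ξ = μ ∨ ξ = ν) →
        r μ + 1 = r ν) ∧
    -- (4)
    (∀ μ ∈ Wt, ∀ i : I, ∀ a b : ℕ,
      (∀ k : ℕ, k ≤ a → μ - (k : ℝ) • S.α i ∈ Wt) →
      (μ - ((a : ℝ) + 1) • S.α i ∉ Wt) →
      (∀ k : ℕ, k ≤ b → μ + (k : ℝ) • S.α i ∈ Wt) →
      (μ + ((b : ℝ) + 1) • S.α i ∉ Wt) →
      (a : ℝ) - (b : ℝ) = ⟪μ, coroot (S.α i)⟫) := by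
    classical
  refine ⟨fun μ hμ ν hν => aux_part1 S hWt hsat hμ hν, ?_, ?_,
    fun μ hμ i a b ha ha1 hb hb1 => aux_part4 S hWt hsat i a b ha ha1 hb hb1⟩
  · -- part 2
    intro i μ hμ ν hpath
    have key : ∃ k : ℤ, ν - μ = (k : ℝ) • S.α i := by
      induction hpath with
      | refl => exact ⟨0, by simp⟩
      | @tail b c h1 h2 ih =>
        obtain ⟨k, hk⟩ := ih
        rcases h2.2 with h | h
        · refine ⟨k + 1, ?_⟩
          rw [← h, show b + S.α i - μ = (b - μ) + S.α i from by abel, hk]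
          push_cast; module
        · refine ⟨k - 1, ?_⟩
          rw [show c - μ = (b - μ) - S.α i from by rw [← h]; abel, hk]
          push_cast; module
    refine ⟨key, ?_⟩
    obtain ⟨k, hk⟩ := key
    rcases le_or_gt 0 k with h | h
    · refine Or.inl (aux_wle_smul S i k.toNat ?_)
      rw [hk, show ((k.toNat : ℕ) : ℝ) = ((k : ℤ) : ℝ) from by
        exact_mod_cast congrArg (Int.cast : ℤ → ℝ) (Int.toNat_of_nonneg h)]
    · refine Or.inr (aux_wle_smul S i (-k).toNat ?_)
      rw [show μ - ν = -(ν - μ) from by abel, hk,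
        show (((-k).toNat : ℕ) : ℝ) = ((-k : ℤ) : ℝ) from by
          exact_mod_cast congrArg (Int.cast : ℤ → ℝ) (Int.toNat_of_nonneg (by omega))]
      push_cast; module
  · -- part 3
    intro hne
    set g : E → ℝ := fun x => ⟪x, S.rhoCheck⟫ with hg
    have gstep : ∀ (x : E) (i : I), g (x + S.α i) = g x + 1 := by
      intro x i; simp only [hg]; rw [inner_add_left, aux_g_alpha]
    set Step : E → E → Prop :=
      fun x y => (x ∈ Wt ∧ y ∈ Wt) ∧ ∃ i, x + S.α i = y ∨ y + S.α i = x with hStepDef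
    have hsymm : ∀ x y, Step x y → Step y x := by
      rintro x y ⟨⟨ha', hb'⟩, ⟨i, h⟩⟩
      exact ⟨⟨hb', ha'⟩, ⟨i, h.symm⟩⟩
    have hRsymm : ∀ x y, Relation.ReflTransGen Step x y → Relation.ReflTransGen Step y x := by
      intro x y h
      induction h with
      | refl => exact .refl
      | tail h1 h2 ih => exact Relation.ReflTransGen.head (hsymm _ _ h2) ih
    set R := Relation.ReflTransGen Step with hR
    set compS : E → Set E := fun x => {y | y ∈ Wt ∧ R x y} with hcomp
    have hcomp_fin : ∀ x, (g '' compS x).Finite :=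
      fun x => (hfin.subset (fun y hy => hy.1)).image g
    set m : E → ℝ := fun x => sInf (g '' compS x) with hm
    have hx_self : ∀ x ∈ Wt, x ∈ compS x := fun x hx => ⟨hx, .refl⟩
    have hm_le : ∀ x, ∀ y ∈ compS x, m x ≤ g y := by
      intro x y hy
      exact csInf_le (hcomp_fin x).bddBelow ⟨y, hy, rfl⟩
    have hm_mem : ∀ x ∈ Wt, ∃ y ∈ compS x, m x = g y := by
      intro x hx
      have hne' : (g '' compS x).Nonempty := ⟨g x, x, hx_self x hx, rfl⟩
      obtain ⟨y, hy, hgy⟩ := hne'.csInf_mem (hcomp_fin x)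
      exact ⟨y, hy, hgy.symm⟩
    have hdiff : ∀ x y, R x y → ∃ d : ℤ, g y - g x = (d : ℝ) := by
      intro x y h
      induction h with
      | refl => exact ⟨0, by simp⟩
      | @tail b c h1 h2 ih =>
        obtain ⟨d, hd⟩ := ih
        obtain ⟨i, hi | hi⟩ := h2.2
        · exact ⟨d + 1, by rw [← hi, gstep]; push_cast; linarith⟩
        · refine ⟨d - 1, ?_⟩
          have h3 := gstep c i
          rw [hi] at h3
          push_cast; linarith
    have hcomp_eq : ∀ x y, x ∈ Wt → y ∈ Wt → R x y → compS x = compS y := by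
      intro x y hx hy hxy
      ext z
      exact ⟨fun hz => ⟨hz.1, .trans (hRsymm x y hxy) hz.2⟩,
        fun hz => ⟨hz.1, .trans hxy hz.2⟩⟩
    set r : E → ℕ := fun x => ⌊g x - m x⌋₊ with hr2
    have hr_cast : ∀ x ∈ Wt, (r x : ℝ) = g x - m x := by
      intro x hx
      obtain ⟨y, hy, hgy⟩ := hm_mem x hx
      obtain ⟨d, hd⟩ := hdiff x y hy.2
      have h0 : m x ≤ g x := hm_le x x (hx_self x hx)
      have he : g x - m x = ((-d : ℤ) : ℝ) := by rw [hgy]; push_cast; linarith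
      have hd0 : 0 ≤ -d := by
        have h4 : (0 : ℝ) ≤ ((-d : ℤ) : ℝ) := by rw [← he]; linarith
        exact_mod_cast h4
      have he' : g x - m x = (((-d).toNat : ℕ) : ℝ) := by
        rw [he]
        exact_mod_cast (congrArg (Int.cast : ℤ → ℝ) (Int.toNat_of_nonneg hd0)).symm
      calc (r x : ℝ) = ((⌊g x - m x⌋₊ : ℕ) : ℝ) := rfl
        _ = (((-d).toNat : ℕ) : ℝ) := by rw [he', Nat.floor_natCast]
        _ = g x - m x := he'.symm
    have hm_step : ∀ x y, Step x y → m x = m y := by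
      intro x y h
      have h5 := hcomp_eq x y h.1.1 h.1.2 (Relation.ReflTransGen.single h)
      simp only [hm, h5]
    have hcover_step : ∀ μ' ∈ Wt, ∀ ν' ∈ Wt,
        (S.wle μ' ν' ∧ μ' ≠ ν' ∧ ∀ ξ ∈ Wt, S.wle μ' ξ → S.wle ξ ν' → ξ = μ' ∨ ξ = ν') →
        r μ' + 1 = r ν' := by
      intro μ' hμ' ν' hν' hcov
      obtain ⟨i, hi⟩ := (aux_part1 S hWt hsat hμ' hν').1 hcov
      have hst : Step μ' ν' := ⟨⟨hμ', hν'⟩, i, Or.inl hi⟩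
      have hmeq : m μ' = m ν' := hm_step _ _ hst
      have hgs : g ν' = g μ' + 1 := by rw [← hi, gstep]
      have h6 : ((r μ' + 1 : ℕ) : ℝ) = (r ν' : ℝ) := by
        rw [hr_cast _ hν', hgs, ← hmeq]; push_cast; rw [hr_cast _ hμ']; ring
      exact_mod_cast h6
    obtain ⟨ν₀, hν₀F, hν₀max⟩ :=
      Finset.exists_max_image hfin.toFinset r (hfin.toFinset_nonempty.2 hne)
    have hν₀W : ν₀ ∈ Wt := hfin.mem_toFinset.1 hν₀F
    refine ⟨r ν₀, r, ?_, fun μ' hμ' => hν₀max μ' (hfin.mem_toFinset.2 hμ'), hcover_step⟩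
    intro n hn
    obtain ⟨y₀, hy₀, hgy₀⟩ := hm_mem ν₀ hν₀W
    have hy₀W : y₀ ∈ Wt := hy₀.1
    have hmy₀ : m y₀ = m ν₀ := by
      have h7 := hcomp_eq ν₀ y₀ hν₀W hy₀W hy₀.2
      simp only [hm, h7]
    have hry₀ : r y₀ = 0 := by
      have h8 : (r y₀ : ℝ) = 0 := by rw [hr_cast _ hy₀W, hmy₀, hgy₀]; ring
      exact_mod_cast h8
    have ivt : ∀ x y, R x y → x ∈ Wt → ∀ n' : ℕ, r x ≤ n' → n' ≤ r y →
        ∃ z ∈ Wt, r z = n' := by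
      intro x y h
      induction h with
      | refl => exact fun hx n' h1 h2 => ⟨x, hx, le_antisymm h1 h2⟩
      | @tail b c h1 h2 ih =>
        intro hx n' h1' h2'
        by_cases hc' : n' ≤ r b
        · exact ih hx n' h1' hc'
        · push_neg at hc'
          have hbW : b ∈ Wt := h2.1.1
          have hcW : c ∈ Wt := h2.1.2
          have hmeq : m b = m c := hm_step _ _ h2
          have hgpm : g c = g b + 1 ∨ g c = g b - 1 := by
            obtain ⟨i, hi | hi⟩ := h2.2
            · exact Or.inl (by rw [← hi, gstep])
            · refine Or.inr ?_
              have h3 := gstep c i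
              rw [hi] at h3
              linarith
          have hle : r c ≤ r b + 1 := by
            have h9 : (r c : ℝ) ≤ (r b : ℝ) + 1 := by
              rw [hr_cast _ hcW, hr_cast _ hbW, ← hmeq]
              rcases hgpm with h' | h' <;> rw [h'] <;> linarith
            exact_mod_cast h9
          exact ⟨c, hcW, by omega⟩
    exact ivt y₀ ν₀ (hRsymm ν₀ y₀ hy₀.2) hy₀W n (by omega) hn
end
end

section
/- Splitting Theorem: let R be a finite ranked poset with edges colored by I, let J ⊆ I, and let ν = Σ_{j∈J} ν_j ω_j^J be a dominant weight of Φ_J. Suppose WGF(R)|_J is W_J-invariant. Suppose 𝒮 ⊆ R is such that ν + wt^J(s) is Φ_J-dominant for every s ∈ 𝒮. Suppose further there are a bijection τ : R∖𝒮 → R∖𝒮 and a function κ : R∖𝒮 → J such that wt^J(τ(x)) = wt^J(x) − (1 + ν_{κ(x)} + m_{κ(x)}(x))·α_{κ(x)} for all x ∈ R∖𝒮. Then in ℤ[Λ_{Φ_J}]: χ^{Φ_J}_ν · WGF(R)|_J = Σ_{s∈𝒮} χ^{Φ_J}_{ν + wt^J(s)}. -/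
open scoped BigOperators RealInnerProductSpace

noncomputable section

/-- A finite ranked poset with covering edges colored by `I`, identified with its
edge-colored Hasse diagram:  `edge i x y` means there is a covering edge `x →_i y`, and
`rank` is a rank function (each edge raises rank by one). -/
structure ColoredPoset (I : Type*) where
  V : Type
  [fintypeV : Fintype V]
  edge : I → V → V → Prop
  rank : V → ℤ
  rank_edge : ∀ i x y, edge i x y → rank y = rank x + 1

attribute [instance] ColoredPoset.fintypeV

namespace ColoredPoset

variable {I : Type*} (P : ColoredPoset I)

/-- One (undirected) step along an edge whose color lies in `J`. -/
def stepIn (J : Set I) (x y : P.V) : Prop := ∃ i ∈ J, P.edge i x y ∨ P.edge i y x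

/-- `x` and `y` lie in the same `J`-component. -/
def connIn (J : Set I) (x y : P.V) : Prop := Relation.ReflTransGen (P.stepIn J) x y

/-- The `i`-component `comp_i(x)` of `x`. -/
def comp (i : I) (x : P.V) : Set P.V := {y | P.connIn {i} x y}

/-- `ρ_i(x)`: the rank of `x` within its `i`-component. -/
def rhoi (i : I) (x : P.V) : ℕ := (P.rank x - sInf (P.rank '' P.comp i x)).toNat

/-- `l_i(x)`: the length of the `i`-component of `x`. -/
def li (i : I) (x : P.V) : ℕ :=
  (sSup (P.rank '' P.comp i x) - sInf (P.rank '' P.comp i x)).toNat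

/-- `δ_i(x) = l_i(x) - ρ_i(x)`: the depth of `x` within its `i`-component. -/
def deltai (i : I) (x : P.V) : ℕ := P.li i x - P.rhoi i x

/-- `m_i(x) = ρ_i(x) - δ_i(x) = 2ρ_i(x) - l_i(x)`. -/
def mi (i : I) (x : P.V) : ℤ := (P.rhoi i x : ℤ) - (P.deltai i x : ℤ)

/-- The partial order generated by the colored (covering) edges. -/
def ple (x y : P.V) : Prop := Relation.ReflTransGen (fun a b => ∃ i, P.edge i a b) x y

/-- The poset is connected. -/
def Connected : Prop := ∀ x y : P.V, P.connIn Set.univ x y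

/-- The poset is fibrous:  every `i`-component is a chain. -/
def Fibrous : Prop :=
  ∀ (i : I) (x y : P.V), P.connIn {i} x y →
    Relation.ReflTransGen (P.edge i) x y ∨ Relation.ReflTransGen (P.edge i) y x

end ColoredPoset

namespace RootSystemBase

variable {E : Type*} [NormedAddCommGroup E] [InnerProductSpace ℝ E]
  {I : Type*} [Fintype I] [DecidableEq I]
variable (S : RootSystemBase E I)

/-- The weight `wt(x) = Σᵢ m_i(x) ωᵢ` of an element of an edge-colored ranked poset. -/
def wtv (P : ColoredPoset I) (x : P.V) : E := ∑ i, (P.mi i x : ℝ) • S.ω i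

/-- `P` is `M_Φ`-structured:  `wt(s) + αᵢ = wt(t)` whenever `s →_i t`. -/
def MStruct (P : ColoredPoset I) : Prop :=
  ∀ (i : I) (x y : P.V), P.edge i x y → S.wtv P x + S.α i = S.wtv P y

/-- The weight generating function `WGF(P) = Σ_{x ∈ P} e^{wt(x)}`. -/
def WGF (P : ColoredPoset I) : AddMonoidAlgebra ℤ E := ∑ x : P.V, expw (S.wtv P x)

/-- `P` is a splitting poset for `χ`:  `P` is `M_Φ`-structured and `WGF(P) = χ`. -/
def IsSplittingPoset (P : ColoredPoset I) (χ : AddMonoidAlgebra ℤ E) : Prop :=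
  S.MStruct P ∧ S.WGF P = χ

end RootSystemBase

namespace RootSystemBase

variable {E : Type*} [NormedAddCommGroup E] [InnerProductSpace ℝ E] [FiniteDimensional ℝ E]
  {I : Type*} [Fintype I] [DecidableEq I]
variable (S : RootSystemBase E I)

/-- The subspace `𝔈_J` spanned by the simple roots `{α_j}_{j ∈ J}`. -/
def EJ (J : Finset I) : Submodule ℝ E := Submodule.span ℝ (S.α '' ↑J)

/-- The fundamental weight `ω_j^J` of `Φ_J`: the orthogonal projection of `ω_j` onto
`𝔈_J`. -/
def omegaJ (J : Finset I) (j : I) : E := (Submodule.orthogonalProjectionOnto (S.EJ J) (S.ω j) : E)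

/-- The parabolic subgroup `W_J`, generated by the simple reflections `{s_j}_{j ∈ J}`. -/
def WJ (J : Finset I) : Subgroup (E ≃ₗ[ℝ] E) :=
  Subgroup.closure {w : E ≃ₗ[ℝ] E | ∃ j ∈ J, ∀ v, w v = rootReflection (S.α j) v}

/-- The alternation operator `𝒜_J` over `W_J`. -/
def AltJ (J : Finset I) (φ : AddMonoidAlgebra ℤ E) : AddMonoidAlgebra ℤ E :=
  ∑ᶠ w : S.WJ J, sgnDet (w : E ≃ₗ[ℝ] E) • actGR (w : E ≃ₗ[ℝ] E) φ

/-- `ϱ_J`, the sum of the fundamental weights of `Φ_J`. -/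
def rhoJ (J : Finset I) : E := ∑ j ∈ J, S.omegaJ J j

/-- Membership in the weight lattice `Λ_{Φ_J}` of `Φ_J`. -/
def IsWeightJ (J : Finset I) (μ : E) : Prop := ∃ c : I → ℤ, μ = ∑ j ∈ J, (c j : ℝ) • S.omegaJ J j

/-- `μ` is a `Φ_J`-dominant weight. -/
def IsDominantJ (J : Finset I) (μ : E) : Prop := ∃ c : I → ℕ, μ = ∑ j ∈ J, (c j : ℝ) • S.omegaJ J j

/-- `χ` is the `Φ_J`-Weyl bialternant attached to the `Φ_J`-dominant weight `μ`. -/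
def IsBialternantJ (J : Finset I) (μ : E) (χ : AddMonoidAlgebra ℤ E) : Prop :=
  (∀ ν ∈ suppOf χ, S.IsWeightJ J ν) ∧
    S.AltJ J (expw (S.rhoJ J)) * χ = S.AltJ J (expw (μ + S.rhoJ J))

/-- The `J`-weight `wt^J(x) = Σ_{j ∈ J} m_j(x) ω_j^J` of an element of an edge-colored
ranked poset. -/
def wtJ (J : Finset I) (P : ColoredPoset I) (x : P.V) : E :=
  ∑ j ∈ J, (P.mi j x : ℝ) • S.omegaJ J j

/-- The restricted weight generating function `WGF(R)|_J = Σ_{x ∈ R} e^{wt^J(x)}`. -/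
def WGFJ (J : Finset I) (P : ColoredPoset I) : AddMonoidAlgebra ℤ E :=
  ∑ x : P.V, expw (S.wtJ J P x)

end RootSystemBase

section SplitAux

variable {E : Type*} [NormedAddCommGroup E] [InnerProductSpace ℝ E]

lemma inner_coroot_eq (β v : E) : ⟪v, coroot β⟫ = (2 / ⟪β, β⟫) * ⟪v, β⟫ := by
  simp [coroot, real_inner_smul_right]

lemma iipNZ {β : E} (hβ : β ≠ 0) : ⟪β, β⟫ ≠ 0 := by
  simpa using hβ

lemma rootReflection_eq (β v : E) :
    rootReflection β v = v - ((2 / ⟪β, β⟫) * ⟪v, β⟫) • β := by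
  rw [rootReflection, inner_coroot_eq]

lemma rootReflection_zero (v : E) : rootReflection (0 : E) v = v := by
  simp [rootReflection_eq]

lemma inner_rootReflection (β u v : E) :
    ⟪rootReflection β u, rootReflection β v⟫ = ⟪u, v⟫ := by
  by_cases hβ : β = 0
  · simp [hβ, rootReflection_zero]
  · have h : ⟪β, β⟫ ≠ 0 := iipNZ hβ
    rw [rootReflection_eq, rootReflection_eq, inner_sub_left, inner_sub_right,
      inner_sub_right, real_inner_smul_left, real_inner_smul_left,
      real_inner_smul_right, real_inner_smul_right, real_inner_comm β u]
    field_simp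
    rw [real_inner_comm v β]
    ring

lemma rootReflection_invol (β : E) : Function.Involutive (rootReflection β) := by
  intro v
  by_cases hβ : β = 0
  · simp [hβ, rootReflection_zero]
  · have h : ⟪β, β⟫ ≠ 0 := iipNZ hβ
    rw [rootReflection_eq, rootReflection_eq, inner_sub_left, real_inner_smul_left]
    have hs : (2 / ⟪β, β⟫ * (⟪v, β⟫ - 2 / ⟪β, β⟫ * ⟪v, β⟫ * ⟪β, β⟫) : ℝ)
        = -(2 / ⟪β, β⟫ * ⟪v, β⟫) := by
      field_simp
      ring
    rw [hs]
    module

/-- `rootReflection β` as a linear map. -/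
def reflLM (β : E) : E →ₗ[ℝ] E where
  toFun := rootReflection β
  map_add' u v := by
    simp only [rootReflection, inner_add_left, add_smul]
    abel
  map_smul' r v := by
    simp only [rootReflection, real_inner_smul_left, RingHom.id_apply, smul_sub, smul_smul]

@[simp] lemma reflLM_apply (β v : E) : reflLM β v = rootReflection β v := rfl

/-- `rootReflection β` as a linear equivalence. -/
def sRefl (β : E) : E ≃ₗ[ℝ] E := LinearEquiv.ofInvolutive (reflLM β) (rootReflection_invol β)

@[simp] lemma sRefl_apply (β v : E) : sRefl β v = rootReflection β v := rfl

lemma sRefl_mul_self (β : E) : sRefl β * sRefl β = 1 := by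
  apply LinearEquiv.toLinearMap_injective
  apply LinearMap.ext
  intro v
  exact rootReflection_invol β v

lemma sRefl_inv (β : E) : (sRefl β)⁻¹ = sRefl β :=
  inv_eq_of_mul_eq_one_right (sRefl_mul_self β)

lemma rootReflection_self {β : E} (hβ : β ≠ 0) : rootReflection β β = -β := by
  have h : ⟪β, β⟫ ≠ 0 := iipNZ hβ
  rw [rootReflection_eq]
  rw [show (2 / ⟪β, β⟫) * ⟪β, β⟫ = 2 by field_simp]
  module

lemma coroot_map_eq {w : E ≃ₗ[ℝ] E} (hw : ∀ u v : E, ⟪w u, w v⟫ = ⟪u, v⟫) (γ : E) :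
    coroot (w γ) = w (coroot γ) := by
  rw [coroot, coroot, hw, map_smul]

lemma sRefl_conj {w : E ≃ₗ[ℝ] E} (hw : ∀ u v : E, ⟪w u, w v⟫ = ⟪u, v⟫) (γ : E) :
    sRefl (w γ) = w * sRefl γ * w⁻¹ := by
  apply LinearEquiv.toLinearMap_injective
  apply LinearMap.ext
  intro v
  show rootReflection (w γ) v = w (rootReflection γ (w⁻¹ v))
  rw [rootReflection, rootReflection, coroot_map_eq hw]
  have h1 : ⟪v, w (coroot γ)⟫ = ⟪(w⁻¹ : E ≃ₗ[ℝ] E) v, coroot γ⟫ := by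
    conv_lhs => rw [show v = w ((w⁻¹ : E ≃ₗ[ℝ] E) v) from (w.apply_symm_apply v).symm]
    rw [hw]
  rw [h1, map_sub, map_smul]
  congr 1
  exact (w.apply_symm_apply v).symm

lemma det_reflLM [FiniteDimensional ℝ E] {β : E} (hβ : β ≠ 0) :
    LinearMap.det (reflLM β) = -1 := by
  classical
  set K : Submodule ℝ E := Submodule.span ℝ (Set.range fun _ : Fin 1 => β) with hK
  have hβK : β ∈ K := Submodule.subset_span ⟨0, rfl⟩
  have hli : LinearIndependent ℝ (fun _ : Fin 1 => β) := linearIndependent_unique_iff.mpr hβ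
  let b₁ : Module.Basis (Fin 1) ℝ K := Module.Basis.span hli
  let b₂ := Module.finBasis ℝ (Kᗮ : Submodule ℝ E)
  have hc : IsCompl K Kᗮ := Submodule.isCompl_orthogonal_of_hasOrthogonalProjection
  let e := Submodule.prodEquivOfIsCompl K Kᗮ hc
  have he : ∀ x : K × Kᗮ, e x = (x.1 : E) + (x.2 : E) := by
    intro x
    have := LinearMap.congr_fun (Submodule.coe_prodEquivOfIsCompl K Kᗮ hc) x
    rw [LinearEquiv.coe_coe] at this
    rw [this, LinearMap.coprod_apply, Submodule.coe_subtype, Submodule.coe_subtype]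
  let bE := (b₁.prod b₂).map e
  have hb1 : (bE (Sum.inl 0) : E) = β := by
    show e ((b₁.prod b₂) (Sum.inl 0)) = β
    rw [he]
    have h1 : ((b₁.prod b₂) (Sum.inl 0)).1 = b₁ 0 := Module.Basis.prod_apply_inl_fst _ _ _
    have h2 : ((b₁.prod b₂) (Sum.inl 0)).2 = 0 := Module.Basis.prod_apply_inl_snd _ _ _
    rw [h1, h2]
    rw [Submodule.coe_zero, add_zero]
    exact congrArg Subtype.val (Module.Basis.span_apply hli 0)
  have hb2 : ∀ k, (bE (Sum.inr k) : E) = (b₂ k : E) := by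
    intro k
    show e ((b₁.prod b₂) (Sum.inr k)) = _
    rw [he]
    have h1 : ((b₁.prod b₂) (Sum.inr k)).1 = 0 := Module.Basis.prod_apply_inr_fst _ _ _
    have h2 : ((b₁.prod b₂) (Sum.inr k)).2 = b₂ k := Module.Basis.prod_apply_inr_snd _ _ _
    rw [h1, h2]
    simp
  have hfix : ∀ k, reflLM β (bE (Sum.inr k)) = bE (Sum.inr k) := by
    intro k
    have hmem : (bE (Sum.inr k) : E) ∈ Kᗮ := by rw [hb2]; exact (b₂ k).2
    have hzero : ⟪bE (Sum.inr k), coroot β⟫ = 0 := by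
      rw [real_inner_comm]
      exact (Submodule.mem_orthogonal K _).mp hmem (coroot β)
        (Submodule.smul_mem _ _ hβK)
    show rootReflection β _ = _
    rw [rootReflection, hzero, zero_smul, sub_zero]
  have hneg : reflLM β (bE (Sum.inl 0)) = -(bE (Sum.inl 0)) := by
    rw [hb1]
    show rootReflection β β = -β
    exact rootReflection_self hβ
  let d : (Fin 1 ⊕ Fin (Module.finrank ℝ (Kᗮ : Submodule ℝ E))) → ℝ :=
    Sum.elim (fun _ => (-1 : ℝ)) fun _ => 1
  have hmat : LinearMap.toMatrix bE bE (reflLM β) = Matrix.diagonal d := by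
    ext i j
    rw [LinearMap.toMatrix_apply]
    rcases j with j | j
    · have hj : j = 0 := Subsingleton.elim _ _
      subst hj
      rw [hneg, map_neg, Module.Basis.repr_self]
      rw [Finsupp.neg_apply, Finsupp.single_apply, Matrix.diagonal]
      by_cases h : i = Sum.inl 0
      · subst h; simp [d]
      · simp only [Matrix.of_apply]
        rw [if_neg (fun h' => h h'.symm), if_neg (fun h' => h h')]
        simp
    · rw [hfix, Module.Basis.repr_self, Finsupp.single_apply, Matrix.diagonal]
      by_cases h : i = Sum.inr j
      · subst h; simp [d]
      · simp only [Matrix.of_apply]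
        rw [if_neg (fun h' => h h'.symm), if_neg (fun h' => h h')]
  rw [← LinearMap.det_toMatrix bE, hmat, Matrix.det_diagonal, Fintype.prod_sum_type]
  simp [d]

lemma detE_mul (w w' : E ≃ₗ[ℝ] E) :
    LinearMap.det ((w * w' : E ≃ₗ[ℝ] E) : E →ₗ[ℝ] E)
      = LinearMap.det (w : E →ₗ[ℝ] E) * LinearMap.det (w' : E →ₗ[ℝ] E) := by
  rw [show ((w * w' : E ≃ₗ[ℝ] E) : E →ₗ[ℝ] E)
      = (w : E →ₗ[ℝ] E) ∘ₗ (w' : E →ₗ[ℝ] E) from rfl, LinearMap.det_comp]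

lemma sgnDet_one : sgnDet (1 : E ≃ₗ[ℝ] E) = 1 := by
  rw [sgnDet, show ((1 : E ≃ₗ[ℝ] E) : E →ₗ[ℝ] E) = LinearMap.id from rfl,
    LinearMap.det_id, if_pos rfl]

lemma sgnDet_mul_sRefl [FiniteDimensional ℝ E] {w : E ≃ₗ[ℝ] E}
    (hw : LinearMap.det (w : E →ₗ[ℝ] E) = 1 ∨ LinearMap.det (w : E →ₗ[ℝ] E) = -1)
    {β : E} (hβ : β ≠ 0) :
    sgnDet (w * sRefl β) = - sgnDet w := by
  have hd : LinearMap.det ((w * sRefl β : E ≃ₗ[ℝ] E) : E →ₗ[ℝ] E)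
      = - LinearMap.det (w : E →ₗ[ℝ] E) := by
    rw [detE_mul, show ((sRefl β : E ≃ₗ[ℝ] E) : E →ₗ[ℝ] E) = reflLM β from rfl,
      det_reflLM hβ]
    ring
  rcases hw with h | h <;> rw [sgnDet, sgnDet, hd, h] <;> norm_num

section GR

variable {F : Type*} [AddCommGroup F]

lemma expw_mul (μ ν : F) : expw μ * expw ν = expw (μ + ν) := by
  rw [expw, expw, expw, AddMonoidAlgebra.single_mul_single, mul_one]

end GR

lemma actGR_expw (w : E ≃ₗ[ℝ] E) (μ : E) : actGR w (expw μ) = expw (w μ) := by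
  rw [actGR, expw, expw, AddMonoidAlgebra.coeff_single, Finsupp.mapDomain_single,
    AddMonoidAlgebra.ofCoeff_single]

lemma actGR_mul (w : E ≃ₗ[ℝ] E) (φ ψ : AddMonoidAlgebra ℤ E) :
    actGR w (φ * ψ) = actGR w φ * actGR w ψ :=
  AddMonoidAlgebra.mapDomain_mul (w.toLinearMap.toAddMonoidHom) φ ψ

lemma actGR_zsmul (w : E ≃ₗ[ℝ] E) (k : ℤ) (φ : AddMonoidAlgebra ℤ E) :
    actGR w (k • φ) = k • actGR w φ :=
  by rw [actGR, actGR, AddMonoidAlgebra.coeff_smul, Finsupp.mapDomain_smul,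
    AddMonoidAlgebra.ofCoeff_smul]

lemma actGR_sum {γ : Type*} (w : E ≃ₗ[ℝ] E) (s : Finset γ) (f : γ → AddMonoidAlgebra ℤ E) :
    actGR w (∑ x ∈ s, f x) = ∑ x ∈ s, actGR w (f x) :=
  by simp only [actGR, AddMonoidAlgebra.coeff_sum, Finsupp.mapDomain_finsetSum,
    AddMonoidAlgebra.ofCoeff_sum]

end SplitAux

namespace RootSystemBase

section SplitAux2

set_option linter.unusedSectionVars false

variable {E : Type*} [NormedAddCommGroup E] [InnerProductSpace ℝ E] [FiniteDimensional ℝ E]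
  {I : Type*} [Fintype I] [DecidableEq I]
variable (S : RootSystemBase E I) (J : Finset I)

lemma α_ne_zero (i : I) : S.α i ≠ 0 := S.αBasis.ne_zero i

/-- The product of the simple reflections along a list of indices. -/
def sProd (L : List I) : E ≃ₗ[ℝ] E := (L.map fun j => sRefl (S.α j)).prod

@[simp] lemma sProd_nil : S.sProd [] = 1 := rfl

lemma sProd_cons (j : I) (L : List I) :
    S.sProd (j :: L) = sRefl (S.α j) * S.sProd L := by
  simp [sProd]

lemma sProd_append (L₁ L₂ : List I) :
    S.sProd (L₁ ++ L₂) = S.sProd L₁ * S.sProd L₂ := by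
  simp [sProd]

lemma sRefl_mem_WJ {j : I} (hj : j ∈ J) : sRefl (S.α j) ∈ S.WJ J :=
  Subgroup.subset_closure ⟨j, hj, fun _ => rfl⟩

lemma sProd_mem_WJ {L : List I} (hL : ∀ j ∈ L, j ∈ J) : S.sProd L ∈ S.WJ J := by
  induction L with
  | nil => exact one_mem _
  | cons j L ih =>
      rw [sProd_cons]
      exact mul_mem (S.sRefl_mem_WJ J (hL j (by simp)))
        (ih fun i hi => hL i (by simp [hi]))

lemma exists_list_of_mem_WJ {w : E ≃ₗ[ℝ] E} (hw : w ∈ S.WJ J) :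
    ∃ L : List I, (∀ j ∈ L, j ∈ J) ∧ w = S.sProd L := by
  classical
  set T : Set (E ≃ₗ[ℝ] E) :=
    {w : E ≃ₗ[ℝ] E | ∃ j ∈ J, ∀ v, w v = rootReflection (S.α j) v} with hT
  have hgen : ∀ y ∈ T ∪ T⁻¹, ∃ j ∈ J, y = sRefl (S.α j) := by
    rintro y (hy | hy)
    · obtain ⟨j, hj, hv⟩ := hy
      exact ⟨j, hj, LinearEquiv.toLinearMap_injective (LinearMap.ext fun v => hv v)⟩
    · obtain ⟨j, hj, hv⟩ := hy
      refine ⟨j, hj, ?_⟩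
      have h1 : y⁻¹ = sRefl (S.α j) :=
        LinearEquiv.toLinearMap_injective (LinearMap.ext fun v => hv v)
      rw [← inv_inv y, h1, sRefl_inv]
  have hmem : w ∈ Submonoid.closure (T ∪ T⁻¹) := by
    have := Subgroup.closure_toSubmonoid T
    have h2 : w ∈ (Subgroup.closure T).toSubmonoid := hw
    rw [this] at h2
    exact h2
  obtain ⟨l, hl, hprod⟩ := Submonoid.exists_list_of_mem_closure hmem
  clear hmem hw
  induction l generalizing w with
  | nil => exact ⟨[], by simp, by simp [← hprod]⟩
  | cons y l ih =>
      obtain ⟨j, hj, rfl⟩ := hgen y (hl y (by simp))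
      obtain ⟨L, hLJ, hLe⟩ := ih (w := l.prod) (fun z hz => hl z (List.mem_cons_of_mem _ hz)) rfl
      refine ⟨j :: L, ?_, ?_⟩
      · intro i hi
        rcases List.mem_cons.mp hi with rfl | hi
        · exact hj
        · exact hLJ i hi
      · rw [← hprod, List.prod_cons, hLe, sProd_cons]

lemma sProd_isom (L : List I) (u v : E) :
    ⟪S.sProd L u, S.sProd L v⟫ = ⟪u, v⟫ := by
  induction L with
  | nil => simp
  | cons j L ih =>
      rw [sProd_cons]
      show ⟪sRefl (S.α j) (S.sProd L u), sRefl (S.α j) (S.sProd L v)⟫ = _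
      rw [sRefl_apply, sRefl_apply, inner_rootReflection, ih]

lemma sProd_det (L : List I) :
    LinearMap.det ((S.sProd L : E ≃ₗ[ℝ] E) : E →ₗ[ℝ] E) = 1 ∨
      LinearMap.det ((S.sProd L : E ≃ₗ[ℝ] E) : E →ₗ[ℝ] E) = -1 := by
  induction L with
  | nil => left; exact LinearMap.det_id
  | cons j L ih =>
      rw [sProd_cons, detE_mul,
        show ((sRefl (S.α j) : E ≃ₗ[ℝ] E) : E →ₗ[ℝ] E) = reflLM (S.α j) from rfl,
        det_reflLM (S.α_ne_zero j)]
      rcases ih with h | h <;> rw [h] <;> norm_num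

lemma sProd_maps_Phi (L : List I) : Set.MapsTo ⇑(S.sProd L) S.Φ S.Φ := by
  induction L with
  | nil => intro β hβ; simpa using hβ
  | cons j L ih =>
      intro β hβ
      rw [sProd_cons]
      show sRefl (S.α j) (S.sProd L β) ∈ S.Φ
      rw [sRefl_apply]
      exact S.reflect_mem _ (S.simple_mem j) _ (ih hβ)

lemma α_mem_EJ {j : I} (hj : j ∈ J) : S.α j ∈ S.EJ J :=
  Submodule.subset_span ⟨j, hj, rfl⟩

lemma sProd_maps_EJ {L : List I} (hL : ∀ j ∈ L, j ∈ J) :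
    Set.MapsTo ⇑(S.sProd L) (S.EJ J : Set E) (S.EJ J : Set E) := by
  induction L with
  | nil => intro v hv; simpa using hv
  | cons j L ih =>
      intro v hv
      rw [sProd_cons]
      show rootReflection (S.α j) (S.sProd L v) ∈ S.EJ J
      rw [rootReflection]
      exact sub_mem (ih (fun i hi => hL i (by simp [hi])) hv)
        (Submodule.smul_mem _ _ (S.α_mem_EJ J (hL j (by simp))))

lemma WJ_finite : Finite (S.WJ J) := by
  classical
  have hmaps : ∀ w : S.WJ J, Set.MapsTo ⇑(w : E ≃ₗ[ℝ] E) S.Φ S.Φ := by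
    rintro ⟨w, hw⟩
    obtain ⟨L, _, rfl⟩ := S.exists_list_of_mem_WJ J hw
    exact S.sProd_maps_Phi L
  haveI : Finite S.Φ := S.finite.to_subtype
  apply Finite.of_injective
    (fun w : S.WJ J => fun b : S.Φ => (⟨(w : E ≃ₗ[ℝ] E) b, hmaps w b.2⟩ : S.Φ))
  intro w₁ w₂ h
  apply Subtype.ext
  apply LinearEquiv.toLinearMap_injective
  apply S.αBasis.ext
  intro i
  have h2 := congrFun h ⟨S.α i, S.simple_mem i⟩
  exact congrArg Subtype.val h2

lemma coroot_mem_EJ {q : I} (hq : q ∈ J) : coroot (S.α q) ∈ S.EJ J :=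
  Submodule.smul_mem _ _ (S.α_mem_EJ J hq)

lemma inner_omegaJ_coroot (j : I) {q : I} (hq : q ∈ J) :
    ⟪S.omegaJ J j, coroot (S.α q)⟫ = if j = q then 1 else 0 := by
  have h := Submodule.inner_orthogonalProjectionOnto_eq_of_mem_right (K := S.EJ J)
    ⟨coroot (S.α q), S.coroot_mem_EJ J hq⟩ (S.ω j)
  have h2 : ⟪S.omegaJ J j, coroot (S.α q)⟫ = ⟪S.ω j, coroot (S.α q)⟫ := by
    rw [omegaJ]
    rw [Submodule.coe_inner] at h
    exact h
  rw [h2]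
  exact S.ω_dual j q

lemma inner_sumJ_coroot (c : I → ℝ) {q : I} (hq : q ∈ J) :
    ⟪∑ j ∈ J, c j • S.omegaJ J j, coroot (S.α q)⟫ = c q := by
  rw [sum_inner]
  have h : ∀ j ∈ J, ⟪c j • S.omegaJ J j, coroot (S.α q)⟫
      = if j = q then c j else 0 := by
    intro j _
    rw [real_inner_smul_left, S.inner_omegaJ_coroot J j hq]
    by_cases hjq : j = q <;> simp [hjq]
  rw [Finset.sum_congr rfl h, Finset.sum_ite_eq' J q c]
  simp [hq]

lemma inner_rhoJ_coroot {q : I} (hq : q ∈ J) :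
    ⟪S.rhoJ J, coroot (S.α q)⟫ = 1 := by
  have h := S.inner_sumJ_coroot J (fun _ => 1) hq
  simpa [rhoJ] using h

lemma inner_rhoJ_α_pos {q : I} (hq : q ∈ J) : 0 < ⟪S.rhoJ J, S.α q⟫ := by
  have h := S.inner_rhoJ_coroot J hq
  rw [inner_coroot_eq] at h
  have hpos : (0 : ℝ) < ⟪S.α q, S.α q⟫ :=
    lt_of_le_of_ne real_inner_self_nonneg (Ne.symm (iipNZ (S.α_ne_zero q)))
  by_contra hc
  push_neg at hc
  have h2 : (0 : ℝ) < 2 / ⟪S.α q, S.α q⟫ := by positivity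
  nlinarith

lemma mem_EJ_iff (x : E) : x ∈ S.EJ J ↔ ∀ i ∉ J, S.αBasis.repr x i = 0 := by
  have himg : S.α '' ↑J = ⇑S.αBasis '' ↑J := rfl
  rw [EJ, himg, Module.Basis.mem_span_image]
  constructor
  · intro h i hi
    by_contra h2
    exact hi (h (Finsupp.mem_support_iff.mpr h2))
  · intro h i hi
    simp only [Finset.mem_coe]
    by_contra h2
    exact Finsupp.mem_support_iff.mp hi (h i h2)

/-- The positive roots of `Φ_J`. -/
def PJ : Set E := {β | β ∈ S.Φ ∧ β ∈ S.EJ J ∧ 0 < ⟪S.rhoJ J, β⟫}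

lemma inner_rhoJ_repr (β : E) :
    ⟪S.rhoJ J, β⟫ = ∑ i, S.αBasis.repr β i * ⟪S.rhoJ J, S.α i⟫ := by
  conv_lhs => rw [← S.αBasis.sum_repr β]
  rw [inner_sum]
  refine Finset.sum_congr rfl fun i _ => ?_
  rw [real_inner_smul_right]
  rfl

lemma mem_PJ_of_nonneg {β : E} (hΦ : β ∈ S.Φ) (hEJ : β ∈ S.EJ J)
    (hnn : ∀ i, 0 ≤ S.αBasis.repr β i) : β ∈ S.PJ J := by
  refine ⟨hΦ, hEJ, ?_⟩
  have hβ0 : β ≠ 0 := fun h => S.zero_not_mem (h ▸ hΦ)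
  have hex : ∃ i₀, S.αBasis.repr β i₀ ≠ 0 := by
    by_contra h
    push_neg at h
    apply hβ0
    have : S.αBasis.repr β = 0 := Finsupp.ext fun i => h i
    have h2 := S.αBasis.sum_repr β
    rw [← h2]
    simp [this]
  obtain ⟨i₀, hi₀⟩ := hex
  have hi₀J : i₀ ∈ J := by
    by_contra h
    exact hi₀ ((S.mem_EJ_iff J β).mp hEJ i₀ h)
  rw [S.inner_rhoJ_repr J β]
  apply Finset.sum_pos'
  · intro i _
    by_cases hiJ : i ∈ J
    · exact mul_nonneg (hnn i) (le_of_lt (S.inner_rhoJ_α_pos J hiJ))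
    · rw [(S.mem_EJ_iff J β).mp hEJ i hiJ, zero_mul]
  · exact ⟨i₀, Finset.mem_univ i₀,
      mul_pos (lt_of_le_of_ne (hnn i₀) (Ne.symm hi₀)) (S.inner_rhoJ_α_pos J hi₀J)⟩

lemma inner_rhoJ_neg_of_nonpos {β : E} (hΦ : β ∈ S.Φ) (hEJ : β ∈ S.EJ J)
    (hnp : ∀ i, S.αBasis.repr β i ≤ 0) : ⟪S.rhoJ J, β⟫ < 0 := by
  have hneg : -β ∈ S.PJ J := by
    apply S.mem_PJ_of_nonneg J (S.neg_mem β hΦ) (Submodule.neg_mem _ hEJ)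
    intro i
    rw [map_neg, Finsupp.neg_apply]
    linarith [hnp i]
  have := hneg.2.2
  rw [inner_neg_right] at this
  linarith

lemma repr_nonneg_of_mem_PJ {β : E} (hβ : β ∈ S.PJ J) :
    ∀ i, 0 ≤ S.αBasis.repr β i := by
  rcases S.base_signs β hβ.1 with h | h
  · exact h
  · exact absurd hβ.2.2 (by linarith [S.inner_rhoJ_neg_of_nonpos J hβ.1 hβ.2.1 h])

lemma inner_rhoJ_neg_of_not_mem_PJ {β : E} (hΦ : β ∈ S.Φ) (hEJ : β ∈ S.EJ J)
    (h : β ∉ S.PJ J) : ⟪S.rhoJ J, β⟫ < 0 := by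
  rcases S.base_signs β hΦ with hs | hs
  · exact absurd (S.mem_PJ_of_nonneg J hΦ hEJ hs) h
  · exact S.inner_rhoJ_neg_of_nonpos J hΦ hEJ hs

lemma α_mem_PJ {q : I} (hq : q ∈ J) : S.α q ∈ S.PJ J :=
  ⟨S.simple_mem q, S.α_mem_EJ J hq, S.inner_rhoJ_α_pos J hq⟩

lemma exchange {q : I} (hq : q ∈ J) {β : E} (hβ : β ∈ S.PJ J) (hne : β ≠ S.α q) :
    sRefl (S.α q) β ∈ S.PJ J := by
  have hγΦ : rootReflection (S.α q) β ∈ S.Φ :=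
    S.reflect_mem _ (S.simple_mem q) _ hβ.1
  have hγEJ : rootReflection (S.α q) β ∈ S.EJ J := by
    rw [rootReflection]
    exact sub_mem hβ.2.1 (Submodule.smul_mem _ _ (S.α_mem_EJ J hq))
  have hco : ∀ i, i ≠ q →
      S.αBasis.repr (rootReflection (S.α q) β) i = S.αBasis.repr β i := by
    intro i hi
    rw [rootReflection, map_sub, map_smul]
    have : S.αBasis.repr (S.α q) i = 0 := by
      rw [show S.α q = S.αBasis q from rfl, S.αBasis.repr_self,
        Finsupp.single_apply, if_neg (fun h => hi h.symm)]
    simp [this]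
  have hnn := S.repr_nonneg_of_mem_PJ J hβ
  have hex : ∃ i₀, i₀ ≠ q ∧ 0 < S.αBasis.repr β i₀ := by
    by_contra h
    push_neg at h
    have hzero : ∀ i, i ≠ q → S.αBasis.repr β i = 0 := fun i hi =>
      le_antisymm (h i hi) (hnn i)
    have hβeq : β = S.αBasis.repr β q • S.α q := by
      conv_lhs => rw [← S.αBasis.sum_repr β]
      rw [Fintype.sum_eq_single q]
      · rfl
      · intro i hi
        rw [hzero i hi, zero_smul]
    have hred := S.reduced (S.α q) (S.simple_mem q) (S.αBasis.repr β q)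
      (by rw [← hβeq]; exact hβ.1)
    rcases hred with h1 | h1
    · exact hne (by rw [hβeq, h1, one_smul])
    · have := hnn q
      rw [h1] at this
      linarith
  obtain ⟨i₀, hi₀q, hi₀⟩ := hex
  rw [sRefl_apply]
  rcases S.base_signs _ hγΦ with hs | hs
  · exact S.mem_PJ_of_nonneg J hγΦ hγEJ hs
  · exfalso
    have := hs i₀
    rw [hco i₀ hi₀q] at this
    linarith

lemma first_descent : ∀ (M : List I) (γ : E), γ ∈ S.PJ J → S.sProd M γ ∉ S.PJ J →
    ∃ M₁ t M₂, M = M₁ ++ t :: M₂ ∧ S.sProd M₂ γ ∈ S.PJ J ∧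
      sRefl (S.α t) (S.sProd M₂ γ) ∉ S.PJ J := by
  intro M
  induction M with
  | nil => intro γ h h2; exact absurd (by simpa using h) h2
  | cons t M ih =>
      intro γ hγ hM
      by_cases h : S.sProd M γ ∈ S.PJ J
      · refine ⟨[], t, M, by simp, h, ?_⟩
        rw [sProd_cons] at hM
        exact hM
      · obtain ⟨M₁, t', M₂, hEq, h1, h2⟩ := ih γ hγ h
        exact ⟨t :: M₁, t', M₂, by rw [hEq]; rfl, h1, h2⟩

lemma sProd_eq_one_of_mapsTo : ∀ (n : ℕ) (L : List I), L.length ≤ n →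
    (∀ j ∈ L, j ∈ J) → Set.MapsTo ⇑(S.sProd L) (S.PJ J) (S.PJ J) →
    S.sProd L = 1 := by
  intro n
  induction n with
  | zero =>
      intro L hlen _ _
      rw [List.length_eq_zero_iff.mp (Nat.le_zero.mp hlen)]
      simp
  | succ n ih =>
      intro L hlen hJ hmap
      rcases List.eq_nil_or_concat L with rfl | ⟨L', q, rfl⟩
      · simp
      · rw [List.concat_eq_append] at hlen hJ hmap ⊢
        have hq : q ∈ J := hJ q (by simp)
        have hw : S.sProd (L' ++ [q]) = S.sProd L' * sRefl (S.α q) := by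
          rw [sProd_append, sProd_cons, sProd_nil, mul_one]
        have hαq : S.α q ∈ S.PJ J := S.α_mem_PJ J hq
        have h1 : S.sProd L' (S.α q) ∉ S.PJ J := by
          intro hmem
          have h2 : S.sProd (L' ++ [q]) (S.α q) = - S.sProd L' (S.α q) := by
            rw [hw]
            show S.sProd L' (sRefl (S.α q) (S.α q)) = _
            rw [sRefl_apply, rootReflection_self (S.α_ne_zero q), map_neg]
          have h3 := hmap hαq
          rw [h2] at h3
          have h4 := h3.2.2
          rw [inner_neg_right] at h4
          linarith [hmem.2.2]
        obtain ⟨M₁, t, M₂, hEq, hβ, hnot⟩ := S.first_descent J L' (S.α q) hαq h1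
        have htJ : t ∈ J := hJ t (by rw [hEq]; simp)
        have hM₁J : ∀ j ∈ M₁, j ∈ J := fun j hj => hJ j (by rw [hEq]; simp [hj])
        have hM₂J : ∀ j ∈ M₂, j ∈ J := fun j hj => hJ j (by rw [hEq]; simp [hj])
        have hβα : S.sProd M₂ (S.α q) = S.α t := by
          by_contra hne
          exact hnot (S.exchange J htJ hβ hne)
        have hconj : sRefl (S.α t) = S.sProd M₂ * sRefl (S.α q) * (S.sProd M₂)⁻¹ := by
          rw [← hβα]
          exact sRefl_conj (S.sProd_isom M₂) (S.α q)
        have hwEq : S.sProd (L' ++ [q]) = S.sProd (M₁ ++ M₂) := by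
          rw [hw, hEq, sProd_append, sProd_cons, sProd_append, hconj]
          have hss := sRefl_mul_self (S.α q)
          set a := S.sProd M₁
          set b := S.sProd M₂
          set s := sRefl (S.α q)
          calc a * (b * s * b⁻¹ * b) * s = a * (b * s) * s := by group
            _ = a * b * (s * s) := by group
            _ = a * b := by rw [hss, mul_one]
        have hlen2 : (M₁ ++ M₂).length ≤ n := by
          have h5 : L'.length = M₁.length + M₂.length + 1 := by
            rw [hEq]; simp [List.length_append]; omega
          rw [List.length_append] at hlen ⊢
          simp at hlen
          omega
        rw [hwEq]
        exact ih (M₁ ++ M₂) hlen2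
          (fun j hj => by rcases List.mem_append.mp hj with h | h
                          exacts [hM₁J j h, hM₂J j h])
          (by rw [← hwEq]; exact hmap)

lemma eq_one_of_fix_rhoJ {w : E ≃ₗ[ℝ] E} (hw : w ∈ S.WJ J)
    (hfix : w (S.rhoJ J) = S.rhoJ J) : w = 1 := by
  obtain ⟨L, hL, rfl⟩ := S.exists_list_of_mem_WJ J hw
  apply S.sProd_eq_one_of_mapsTo J L.length L le_rfl hL
  intro β hβ
  refine ⟨S.sProd_maps_Phi L hβ.1, S.sProd_maps_EJ J hL hβ.2.1, ?_⟩
  have hisom := S.sProd_isom L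
  have hfix' : S.sProd L (S.rhoJ J) = S.rhoJ J := hfix
  have h2 := hisom (S.rhoJ J) β
  rw [hfix'] at h2
  rw [h2]
  exact hβ.2.2

lemma det_pm {w : E ≃ₗ[ℝ] E} (hw : w ∈ S.WJ J) :
    LinearMap.det (w : E →ₗ[ℝ] E) = 1 ∨ LinearMap.det (w : E →ₗ[ℝ] E) = -1 := by
  obtain ⟨L, _, rfl⟩ := S.exists_list_of_mem_WJ J hw
  exact S.sProd_det L

lemma inner_wtJ_coroot (P : ColoredPoset I) (x : P.V) {q : I} (hq : q ∈ J) :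
    ⟪S.wtJ J P x, coroot (S.α q)⟫ = (P.mi q x : ℝ) :=
  S.inner_sumJ_coroot J (fun j => (P.mi j x : ℝ)) hq

section AltJFin

variable [Fintype (S.WJ J)]

lemma AltJ_eq_sum (φ : AddMonoidAlgebra ℤ E) :
    S.AltJ J φ = ∑ w : S.WJ J, sgnDet (w : E ≃ₗ[ℝ] E) • actGR (w : E ≃ₗ[ℝ] E) φ :=
  finsum_eq_sum_of_fintype _

lemma AltJ_mul_inv (φ ψ : AddMonoidAlgebra ℤ E)
    (hinv : ∀ w : E ≃ₗ[ℝ] E, w ∈ S.WJ J → actGR w ψ = ψ) :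
    S.AltJ J (φ * ψ) = S.AltJ J φ * ψ := by
  rw [AltJ_eq_sum, AltJ_eq_sum, Finset.sum_mul]
  refine Finset.sum_congr rfl fun w _ => ?_
  rw [actGR_mul, hinv (w : E ≃ₗ[ℝ] E) w.2, smul_mul_assoc]

lemma AltJ_sum {γ : Type*} (s : Finset γ) (f : γ → AddMonoidAlgebra ℤ E) :
    S.AltJ J (∑ x ∈ s, f x) = ∑ x ∈ s, S.AltJ J (f x) := by
  rw [AltJ_eq_sum]
  have h : ∀ w : S.WJ J, sgnDet (w : E ≃ₗ[ℝ] E) • actGR (w : E ≃ₗ[ℝ] E) (∑ x ∈ s, f x)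
      = ∑ x ∈ s, sgnDet (w : E ≃ₗ[ℝ] E) • actGR (w : E ≃ₗ[ℝ] E) (f x) := by
    intro w
    rw [actGR_sum, Finset.smul_sum]
  rw [Finset.sum_congr rfl fun w _ => h w, Finset.sum_comm]
  exact Finset.sum_congr rfl fun x _ => (AltJ_eq_sum S J _).symm

lemma AltJ_sRefl {q : I} (hq : q ∈ J) (μ : E) :
    S.AltJ J (expw (sRefl (S.α q) μ)) = - S.AltJ J (expw μ) := by
  rw [AltJ_eq_sum, AltJ_eq_sum, ← Finset.sum_neg_distrib]
  have hsmem : sRefl (S.α q) ∈ S.WJ J := S.sRefl_mem_WJ J hq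
  apply Fintype.sum_equiv (Equiv.mulRight (⟨sRefl (S.α q), hsmem⟩ : S.WJ J))
  intro u
  have hcoe : ((u * ⟨sRefl (S.α q), hsmem⟩ : S.WJ J) : E ≃ₗ[ℝ] E)
      = (u : E ≃ₗ[ℝ] E) * sRefl (S.α q) := rfl
  show sgnDet (u : E ≃ₗ[ℝ] E) • actGR (u : E ≃ₗ[ℝ] E) (expw (sRefl (S.α q) μ)) = _
  rw [Equiv.coe_mulRight, hcoe]
  rw [actGR_expw, actGR_expw]
  have happ : ((u : E ≃ₗ[ℝ] E) * sRefl (S.α q)) μ = (u : E ≃ₗ[ℝ] E) (sRefl (S.α q) μ) := rfl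
  rw [happ]
  rw [sgnDet_mul_sRefl (S.det_pm J u.2) (S.α_ne_zero q)]
  rw [neg_smul, neg_neg]

lemma coeff_AltJ_rhoJ : coeffOf (S.AltJ J (expw (S.rhoJ J))) (S.rhoJ J) = 1 := by
  classical
  rw [AltJ_eq_sum]
  rw [coeffOf]
  rw [show (∑ w : S.WJ J, sgnDet (w : E ≃ₗ[ℝ] E) • actGR (w : E ≃ₗ[ℝ] E)
      (expw (S.rhoJ J)) : AddMonoidAlgebra ℤ E).coeff
    = ∑ w : S.WJ J, (sgnDet (w : E ≃ₗ[ℝ] E) • actGR (w : E ≃ₗ[ℝ] E)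
      (expw (S.rhoJ J)) : AddMonoidAlgebra ℤ E).coeff from AddMonoidAlgebra.coeff_sum _ _]
  rw [Finset.sum_apply']
  rw [Finset.sum_eq_single (1 : S.WJ J)]
  · rw [show ((1 : S.WJ J) : E ≃ₗ[ℝ] E) = 1 from rfl, sgnDet_one, actGR_expw]
    show ((1 : ℤ) • (expw ((1 : E ≃ₗ[ℝ] E) (S.rhoJ J)) : AddMonoidAlgebra ℤ E)).coeff
        (S.rhoJ J) = 1
    rw [one_smul]
    show (Finsupp.single ((1 : E ≃ₗ[ℝ] E) (S.rhoJ J)) (1 : ℤ)) (S.rhoJ J) = 1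
    rw [show (1 : E ≃ₗ[ℝ] E) (S.rhoJ J) = S.rhoJ J from rfl, Finsupp.single_eq_same]
  · intro w _ hw1
    rw [actGR_expw]
    show (sgnDet (w : E ≃ₗ[ℝ] E) •
      (Finsupp.single ((w : E ≃ₗ[ℝ] E) (S.rhoJ J)) (1 : ℤ) : E →₀ ℤ)) (S.rhoJ J) = 0
    rw [Finsupp.smul_apply, Finsupp.single_apply]
    rw [if_neg, smul_zero]
    intro heq
    apply hw1
    apply Subtype.ext
    exact S.eq_one_of_fix_rhoJ J w.2 heq
  · intro h
    exact absurd (Finset.mem_univ _) h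

lemma AltJ_rhoJ_ne_zero : S.AltJ J (expw (S.rhoJ J)) ≠ 0 := by
  intro h
  have := S.coeff_AltJ_rhoJ J
  rw [h] at this
  simp [coeffOf] at this

end AltJFin

end SplitAux2

end RootSystemBase

/-- **Splitting Theorem** (Theorem 4.1):  let `R` be a finite ranked poset edge-colored by
`I`, `J ⊆ I`, and `ν = Σ_{j∈J} ν_j ω_j^J` a `Φ_J`-dominant weight.  Suppose `WGF(R)|_J` is
`W_J`-invariant, `𝒮 ⊆ R` with `ν + wt^J(s)` `Φ_J`-dominant for all `s ∈ 𝒮`, and there are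
a bijection `τ` of `R∖𝒮` and a vertex-coloring `κ : R∖𝒮 → J` with
`wt^J(τ(x)) = wt^J(x) - (1 + ν_{κ(x)} + m_{κ(x)}(x)) α_{κ(x)}`.  Then
`χ^{Φ_J}_ν ⬝ WGF(R)|_J = Σ_{s∈𝒮} χ^{Φ_J}_{ν + wt^J(s)}`. -/
theorem statement13 {E : Type*} [NormedAddCommGroup E] [InnerProductSpace ℝ E]
    [FiniteDimensional ℝ E] {I : Type*} [Fintype I] [DecidableEq I]
    (S : RootSystemBase E I) (P : ColoredPoset I)
    (J : Finset I) (νc : I → ℕ)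
    (hinv : ∀ w : E ≃ₗ[ℝ] E, w ∈ S.WJ J → actGR w (S.WGFJ J P) = S.WGFJ J P)
    (𝒮 : Finset P.V)
    (hdom : ∀ s ∈ 𝒮,
      S.IsDominantJ J ((∑ j ∈ J, (νc j : ℝ) • S.omegaJ J j) + S.wtJ J P s))
    (τ : P.V → P.V) (hτ : Set.BijOn τ {x : P.V | x ∉ 𝒮} {x : P.V | x ∉ 𝒮})
    (κ : P.V → I) (hκ : ∀ x : P.V, x ∉ 𝒮 → κ x ∈ J)
    (hwt : ∀ x : P.V, x ∉ 𝒮 →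
      S.wtJ J P (τ x) =
        S.wtJ J P x - (1 + (νc (κ x) : ℝ) + (P.mi (κ x) x : ℝ)) • S.α (κ x))
    (Xν : AddMonoidAlgebra ℤ E)
    (hXν : S.IsBialternantJ J (∑ j ∈ J, (νc j : ℝ) • S.omegaJ J j) Xν)
    (Xs : P.V → AddMonoidAlgebra ℤ E)
    (hXs : ∀ s ∈ 𝒮,
      S.IsBialternantJ J ((∑ j ∈ J, (νc j : ℝ) • S.omegaJ J j) + S.wtJ J P s) (Xs s)) :
    Xν * S.WGFJ J P = ∑ s ∈ 𝒮, Xs s := by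
  classical
  haveI : Finite (S.WJ J) := S.WJ_finite J
  haveI : Fintype (S.WJ J) := Fintype.ofFinite _
  letI : Module ℚ E := Module.compHom E (algebraMap ℚ ℝ)
  haveI hns : NoZeroDivisors (AddMonoidAlgebra ℤ E) := by infer_instance
  set ν : E := ∑ j ∈ J, (νc j : ℝ) • S.omegaJ J j with hν
  have hD0 : S.AltJ J (expw (S.rhoJ J)) ≠ 0 := S.AltJ_rhoJ_ne_zero J
  have hflip : ∀ x : P.V, x ∉ 𝒮 →
      S.AltJ J (expw (ν + S.rhoJ J + S.wtJ J P (τ x)))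
        = - S.AltJ J (expw (ν + S.rhoJ J + S.wtJ J P x)) := by
    intro x hx
    have hqJ : κ x ∈ J := hκ x hx
    have hμ : ν + S.rhoJ J + S.wtJ J P (τ x)
        = sRefl (S.α (κ x)) (ν + S.rhoJ J + S.wtJ J P x) := by
      rw [hwt x hx, sRefl_apply, rootReflection]
      rw [inner_add_left, inner_add_left, S.inner_sumJ_coroot J _ hqJ,
        S.inner_rhoJ_coroot J hqJ, S.inner_wtJ_coroot J P x hqJ]
      rw [show ((νc (κ x) : ℝ) + 1 + (P.mi (κ x) x : ℝ))
          = (1 + (νc (κ x) : ℝ) + (P.mi (κ x) x : ℝ)) by ring]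
      abel
    rw [hμ, S.AltJ_sRefl J hqJ]
  have hzero : ∑ x ∈ 𝒮ᶜ, S.AltJ J (expw (ν + S.rhoJ J + S.wtJ J P x)) = 0 := by
    set f : P.V → AddMonoidAlgebra ℤ E :=
      fun x => S.AltJ J (expw (ν + S.rhoJ J + S.wtJ J P x)) with hf
    set T : AddMonoidAlgebra ℤ E := ∑ x ∈ 𝒮ᶜ, f x with hT
    have hbij : T = ∑ x ∈ 𝒮ᶜ, f (τ x) := by
      rw [hT]
      symm
      apply Finset.sum_bij (i := fun x (_ : x ∈ 𝒮ᶜ) => τ x)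
      · intro a ha
        rw [Finset.mem_compl]
        exact hτ.1 (by simpa using ha)
      · intro a ha b hb hab
        exact hτ.2.1 (by simpa using ha) (by simpa using hb) hab
      · intro b hb
        obtain ⟨a, ha, hab⟩ := hτ.2.2 (show b ∈ {x : P.V | x ∉ 𝒮} by simpa using hb)
        exact ⟨a, by simpa using ha, hab⟩
      · intro a ha
        rfl
    have hneg : ∑ x ∈ 𝒮ᶜ, f (τ x) = -T := by
      rw [hT, ← Finset.sum_neg_distrib]
      refine Finset.sum_congr rfl fun x hx => ?_
      exact hflip x (by simpa using hx)
    have h2 : T = -T := hbij.trans hneg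
    have h4 : T + T = 0 := by
      nth_rewrite 2 [h2]
      exact add_neg_cancel T
    have h3 : (2 : AddMonoidAlgebra ℤ E) * T = 0 := by rw [two_mul]; exact h4
    rcases mul_eq_zero.mp h3 with h | h
    · exfalso
      have h1 : (1 : AddMonoidAlgebra ℤ E) = AddMonoidAlgebra.single (0 : E) (1 : ℤ) :=
        AddMonoidAlgebra.one_def
      have h5 : (2 : AddMonoidAlgebra ℤ E) = AddMonoidAlgebra.single (0 : E) (2 : ℤ) := by
        rw [show (2 : AddMonoidAlgebra ℤ E) = 1 + 1 from one_add_one_eq_two.symm, h1,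
          ← AddMonoidAlgebra.single_add]
        norm_num
      rw [h5] at h
      have := AddMonoidAlgebra.single_eq_zero.mp h
      norm_num at this
    · exact h
  have key : S.AltJ J (expw (S.rhoJ J)) * (Xν * S.WGFJ J P)
      = S.AltJ J (expw (S.rhoJ J)) * ∑ s ∈ 𝒮, Xs s := by
    calc S.AltJ J (expw (S.rhoJ J)) * (Xν * S.WGFJ J P)
        = (S.AltJ J (expw (S.rhoJ J)) * Xν) * S.WGFJ J P := (mul_assoc _ _ _).symm
      _ = S.AltJ J (expw (ν + S.rhoJ J)) * S.WGFJ J P := by rw [hXν.2]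
      _ = S.AltJ J (expw (ν + S.rhoJ J) * S.WGFJ J P) := (S.AltJ_mul_inv J _ _ hinv).symm
      _ = S.AltJ J (∑ x : P.V, expw (ν + S.rhoJ J + S.wtJ J P x)) := by
          rw [RootSystemBase.WGFJ, Finset.mul_sum]
          congr 1
          refine Finset.sum_congr rfl fun x _ => ?_
          rw [expw_mul]
      _ = ∑ x : P.V, S.AltJ J (expw (ν + S.rhoJ J + S.wtJ J P x)) := S.AltJ_sum J _ _
      _ = ∑ x ∈ 𝒮, S.AltJ J (expw (ν + S.rhoJ J + S.wtJ J P x)) := by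
          rw [← Finset.sum_add_sum_compl 𝒮, hzero, add_zero]
      _ = ∑ s ∈ 𝒮, S.AltJ J (expw (S.rhoJ J)) * Xs s := by
          refine Finset.sum_congr rfl fun s hs => ?_
          rw [(hXs s hs).2, show ν + S.rhoJ J + S.wtJ J P s
            = (ν + S.wtJ J P s) + S.rhoJ J by abel]
      _ = S.AltJ J (expw (S.rhoJ J)) * ∑ s ∈ 𝒮, Xs s := by rw [Finset.mul_sum]
  exact mul_left_cancel₀ hD0 key
end
end
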